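/- Any probability distribution over the maximal face of the capacity region is a constrained correlated equilibrium: if μ is a Borel probability measure on ℝ^N with μ(F_max) = 1, where F_max := {α ∈ 𝒞 : Σ_{i=1}^N α_i = C_N}, then for every user i and every Borel-measurable deviation map r : ℝ → [0,∞), ∫ ( u_i(α) − u_i(r(α_i), α_{−i}) ) dμ(α) ≥ 0. -/

import Mathlib

open scoped Classical
open MeasureTheory

/-- any probability distribution supported on the maximal face of the
capacity region is a constrained correlated equilibrium. -/
theorem maximal_face_correlated_equilibrium
    (N : ℕ) (hN : 2 ≤ N)
    (P h : Fin N → ℝ) (σ2 : ℝ)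
    (hP : ∀ i, 0 < P i) (hh : ∀ i, 0 < h i) (hσ : 0 < σ2)
    (g : Fin N → ℝ → ℝ)
    (hg : ∀ i, StrictMonoOn (g i) (Set.Ici 0))
    (hgpos : ∀ i x, 0 ≤ x → 0 < g i x)
    (C : Finset (Fin N) → ℝ)
    (hC : ∀ Ω : Finset (Fin N), C Ω = Real.log (1 + (∑ i ∈ Ω, P i * h i) / σ2))
    (𝒞 : Set (Fin N → ℝ))
    (h𝒞 : ∀ α, α ∈ 𝒞 ↔ ((∀ i, 0 ≤ α i) ∧
      ∀ Ω : Finset (Fin N), Ω.Nonempty → ∑ i ∈ Ω, α i ≤ C Ω))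
    (u : Fin N → (Fin N → ℝ) → ℝ)
    (hu : ∀ i α, u i α = if α ∈ 𝒞 then g i (α i) else 0)
    (hgc : ∀ i, ContinuousOn (g i) (Set.Ici 0))
    (μ : Measure (Fin N → ℝ)) [IsProbabilityMeasure μ]
    (hμ : μ {α : Fin N → ℝ | α ∈ 𝒞 ∧ ∑ i, α i = C Finset.univ} = 1) :
    ∀ i : Fin N, ∀ r : ℝ → ℝ, Measurable r → (∀ x, 0 ≤ r x) →
      0 ≤ ∫ α, (u i α - u i (Function.update α i (r (α i)))) ∂μ := by
  intro i r _hr hrnn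
  apply integral_nonneg_of_ae
  have hmeas : MeasurableSet {α : Fin N → ℝ | α ∈ 𝒞 ∧ ∑ i, α i = C Finset.univ} := by
    have heq : {α : Fin N → ℝ | α ∈ 𝒞 ∧ ∑ i, α i = C Finset.univ} =
        (({α : Fin N → ℝ | ∀ i, 0 ≤ α i} ∩
          ⋂ Ω : Finset (Fin N), {α : Fin N → ℝ | Ω.Nonempty → ∑ i ∈ Ω, α i ≤ C Ω}) ∩
          {α : Fin N → ℝ | ∑ i, α i = C Finset.univ}) := by
      ext α
      simp only [Set.mem_setOf_eq, Set.mem_inter_iff, Set.mem_iInter, h𝒞]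
    rw [heq]
    have hsum : ∀ Ω : Finset (Fin N), Measurable (fun α : Fin N → ℝ => ∑ i ∈ Ω, α i) :=
      fun Ω => Finset.measurable_sum _ fun i _ => measurable_pi_apply i
    refine MeasurableSet.inter (MeasurableSet.inter ?_ ?_) ?_
    · rw [Set.setOf_forall]
      exact MeasurableSet.iInter fun i =>
        measurableSet_le measurable_const (measurable_pi_apply i)
    · refine MeasurableSet.iInter fun Ω => ?_
      by_cases hΩ : Ω.Nonempty
      · have : {α : Fin N → ℝ | Ω.Nonempty → ∑ i ∈ Ω, α i ≤ C Ω} =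
            {α : Fin N → ℝ | ∑ i ∈ Ω, α i ≤ C Ω} := by
          ext α; simp [hΩ]
        rw [this]
        exact measurableSet_le (hsum Ω) measurable_const
      · have : {α : Fin N → ℝ | Ω.Nonempty → ∑ i ∈ Ω, α i ≤ C Ω} = Set.univ := by
          ext α; simp [hΩ]
        rw [this]; exact MeasurableSet.univ
    · exact measurableSet_eq_fun (hsum Finset.univ) measurable_const
  have hF : ∀ᵐ α ∂μ, α ∈ {α : Fin N → ℝ | α ∈ 𝒞 ∧ ∑ i, α i = C Finset.univ} := by
    rw [ae_iff]
    have hc : μ ({α : Fin N → ℝ | α ∈ 𝒞 ∧ ∑ i, α i = C Finset.univ}ᶜ) = 0 := by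
      rw [measure_compl hmeas (measure_ne_top μ _), hμ, measure_univ, tsub_self]
    exact hc
  filter_upwards [hF] with α hα
  obtain ⟨hαC, hsum⟩ := hα
  have hα0 : ∀ j, 0 ≤ α j := ((h𝒞 α).1 hαC).1
  have hui : u i α = g i (α i) := by rw [hu]; simp [hαC]
  set β := Function.update α i (r (α i)) with hβ
  by_cases hβC : β ∈ 𝒞
  · have hsumβ : ∑ j, β j ≤ C Finset.univ := by
      refine ((h𝒞 β).1 hβC).2 Finset.univ ⟨i, Finset.mem_univ i⟩
    have hsumβ' : ∑ j, β j = r (α i) + ∑ j ∈ Finset.univ.erase i, α j := by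
      rw [hβ, Finset.sum_update_of_mem (Finset.mem_univ i)]
      simp [Finset.sdiff_singleton_eq_erase]
    have hsumα : ∑ j, α j = α i + ∑ j ∈ Finset.univ.erase i, α j :=
      (Finset.add_sum_erase _ _ (Finset.mem_univ i)).symm
    have hle : r (α i) ≤ α i := by
      have := hsumβ
      rw [hsumβ'] at this
      rw [hsum] at hsumα
      linarith
    have : g i (r (α i)) ≤ g i (α i) :=
      (hg i).monotoneOn (Set.mem_Ici.2 (hrnn _)) (Set.mem_Ici.2 (hα0 i)) hle
    have huβ : u i β = g i (r (α i)) := by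
      rw [hu, if_pos hβC]; simp [hβC, hβ, Function.update_self]
    simp only [Pi.zero_apply, hui, huβ]
    linarith
  · have huβ : u i β = 0 := by rw [hu]; simp [hβC]
    simp only [Pi.zero_apply, hui, huβ]
    have := hgpos i (α i) (hα0 i)
    linarith
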